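/- Let H be a separable Hilbert space and Q a positive semidefinite symmetric bounded operator on H. Then ker(Q) = ker(Q^{1/2}), and the range Q(H) is dense in the Hilbert space (Q^{1/2}(H), ⟨·,·⟩_{Q^{1/2}(H)}) where ⟨Q^{1/2}u, Q^{1/2}v⟩_{Q^{1/2}(H)} := ⟨P u, P v⟩_H with P the orthogonal projection onto ker(Q)^⊥. -/

import Mathlib

open scoped RealInnerProductSpace

/-- For a positive semidefinite symmetric bounded operator `Q` with square root `R = Q^{1/2}`:
`ker Q = ker Q^{1/2}`, and `Q(H)` is dense in the operator-range Hilbert space `Q^{1/2}(H)`.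
Since the `Q^{1/2}(H)`-distance between `Q v = R (R v)` and `R u` (for `u ∈ (ker R)ᗮ`)
equals `‖R v - u‖_H` (the pseudo-preimages being `R v` and `u`), the density statement is:
every `u ∈ (ker R)ᗮ` is approximated by elements `R v` in the `H`-norm. -/
theorem stmt_6
    {H : Type*} [NormedAddCommGroup H] [InnerProductSpace ℝ H] [CompleteSpace H]
    (Q R : H →L[ℝ] H)
    (hQsa : IsSelfAdjoint Q) (hQpos : ∀ x : H, 0 ≤ ⟪Q x, x⟫)
    (hRsa : IsSelfAdjoint R) (hRpos : ∀ x : H, 0 ≤ ⟪R x, x⟫)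
    (hRR : ∀ x : H, R (R x) = Q x) :
    LinearMap.ker (Q : H →ₗ[ℝ] H) = LinearMap.ker (R : H →ₗ[ℝ] H) ∧
    ∀ u ∈ (LinearMap.ker (R : H →ₗ[ℝ] H))ᗮ, ∀ ε > (0 : ℝ), ∃ v : H, ‖R v - u‖ < ε := by
  have hsym : ∀ x y : H, ⟪R x, y⟫ = ⟪x, R y⟫ := hRsa.isSymmetric
  have hrange : (LinearMap.range (R : H →ₗ[ℝ] H) : Submodule ℝ H)ᗮ = LinearMap.ker (R : H →ₗ[ℝ] H) := by
    ext y
    simp only [Submodule.mem_orthogonal, LinearMap.mem_ker, LinearMap.mem_range, ContinuousLinearMap.coe_coe]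
    constructor
    · intro h
      have h1 : ⟪R y, R y⟫ = 0 := by
        have := h (R (R y)) ⟨R y, rfl⟩
        rwa [hsym] at this
      exact inner_self_eq_zero.mp h1
    · intro h x hx
      obtain ⟨z, rfl⟩ := hx
      rw [hsym, h, inner_zero_right]
  constructor
  · ext x
    simp only [LinearMap.mem_ker, ContinuousLinearMap.coe_coe]
    constructor
    · intro hx
      have h1 : ⟪R x, R x⟫ = 0 := by rw [hsym, hRR, hx, inner_zero_right]
      have h2 : R x = 0 := inner_self_eq_zero.mp h1
      exact h2
    · intro hx
      rw [← hRR, hx, map_zero]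
  · intro u hu ε hε
    have hclo : u ∈ (LinearMap.range (R : H →ₗ[ℝ] H) : Submodule ℝ H).topologicalClosure := by
      rw [← Submodule.orthogonal_orthogonal_eq_closure, hrange]
      exact hu
    have : u ∈ closure ((LinearMap.range (R : H →ₗ[ℝ] H) : Submodule ℝ H) : Set H) := hclo
    rw [Metric.mem_closure_iff] at this
    obtain ⟨w, hw, hdist⟩ := this ε hε
    obtain ⟨v, rfl⟩ := hw
    exact ⟨v, by rwa [← dist_eq_norm, dist_comm]⟩
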